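/- Let P_g(α) = Π_{i=1}^{g} (α − (−1)^{i+1}(2i−1)) ∈ ℂ[α]. With r_g as defined by the recursion r₀=1, r₁=ω+δ/2−1, r₂=((ω+δ/2)²−β)/2+ω−δ/2−1/2, g·r_g = (ω+δ/2+(−1)^g(2g−1))r_{g−1} + (1−g)(β+(−1)^g 2δ−2)r_{g−2} − (γ/2)r_{g−3}: the image of r_g under the homomorphism ℂ[ω,β,γ,δ] → ℂ[α] sending ω ↦ α, β ↦ 2, γ ↦ 0, δ ↦ 0 equals P_g(α)/g! ; in particular r_g specializes to a polynomial in α of degree g with roots exactly α = (−1)^{i+1}(2i−1), i = 1,…,g. -/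

import Mathlib

/-!
STATEMENT 17: Let `P_g(α) = Π_{i=1}^{g} (α − (−1)^{i+1}(2i−1)) ∈ ℂ[α]`, and let
`r_g ∈ ℂ[ω,β,γ,δ]` be defined by the recursion `r₀ = 1`, `r₁ = ω + δ/2 − 1`,
`r₂ = ((ω+δ/2)² − β)/2 + ω − δ/2 − 1/2`,
`g·r_g = (ω+δ/2+(−1)^g(2g−1))r_{g−1} + (1−g)(β+(−1)^g 2δ−2)r_{g−2} − (γ/2)r_{g−3}`.
Then the image of `r_g` under `ℂ[ω,β,γ,δ] → ℂ[α]`, `ω ↦ α, β ↦ 2, γ ↦ 0, δ ↦ 0`,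
equals `P_g(α)/g!` (so it has degree `g` with roots exactly `(−1)^{i+1}(2i−1)`,
`i = 1,…,g`; with 0-indexing, the roots are `(−1)^i(2i+1)`, `i = 0,…,g−1`).
Variables: `ω = X 0`, `β = X 1`, `γ = X 2`, `δ = X 3`.
-/

open MvPolynomial

theorem stmt17 (r : ℕ → MvPolynomial (Fin 4) ℂ)
    (h0 : r 0 = 1)
    (h1 : r 1 = X 0 + (2:ℂ)⁻¹ • X 3 - 1)
    (h2 : r 2 = (2:ℂ)⁻¹ • ((X 0 + (2:ℂ)⁻¹ • X 3) ^ 2 - X 1)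
          + X 0 - (2:ℂ)⁻¹ • X 3 - C ((2:ℂ)⁻¹))
    (hrec : ∀ g : ℕ, 3 ≤ g →
      (g : ℂ) • r g
        = (X 0 + (2:ℂ)⁻¹ • X 3 + C ((-1 : ℂ) ^ g * (2 * (g : ℂ) - 1))) * r (g - 1)
          + C (1 - (g : ℂ)) *
              ((X 1 + C ((-1 : ℂ) ^ g * 2) * X 3 - 2) * r (g - 2))
          - (2:ℂ)⁻¹ • (X 2 * r (g - 3))) :
    ∀ g : ℕ,
      MvPolynomial.aeval ![Polynomial.X, 2, 0, 0] (r g)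
        = ((g.factorial : ℂ))⁻¹ •
            ∏ i ∈ Finset.range g,
              (Polynomial.X - Polynomial.C ((-1 : ℂ) ^ i * (2 * (i : ℂ) + 1))) := by
  intro g
  induction g using Nat.strong_induction_on with
  | _ g ih =>
    match g, ih with
    | 0, _ => simp [h0]
    | 1, _ =>
      simp [h1, Finset.prod_range_one]
    | 2, _ =>
      simp [h2, Finset.prod_range_succ, Finset.prod_range_one, Polynomial.smul_eq_C_mul]
      rw [show (2:Polynomial ℂ) = Polynomial.C 2 from (map_ofNat _ _).symm,
        show (1:Polynomial ℂ) = Polynomial.C 1 from Polynomial.C_1.symm]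
      ring_nf
      simp only [← Polynomial.C_mul, ← Polynomial.C_add, ← Polynomial.C_sub,
        ← Polynomial.C_neg, ← Polynomial.C_pow]
      norm_num
      rw [mul_right_comm]
      simp only [← Polynomial.C_mul]
      norm_num
      ring
    | (n+3), ih =>
      have key := congrArg (⇑(MvPolynomial.aeval (R:=ℂ) ![(Polynomial.X : Polynomial ℂ), 2, 0, 0])) (hrec (n+3) (by omega))
      simp only [map_smul, map_add, map_sub, map_mul, aeval_X, MvPolynomial.aeval_C,
        Matrix.cons_val_zero, Matrix.cons_val_one, Matrix.head_cons, Matrix.cons_val_two,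
        Matrix.tail_cons, Matrix.cons_val_three, map_ofNat, map_one,
        Polynomial.algebraMap_eq, smul_zero, mul_zero, zero_mul, sub_self,
        add_zero, zero_add, sub_zero] at key
      have key2 : ((n+3:ℕ):ℂ) • MvPolynomial.aeval ![Polynomial.X, 2, 0, 0] (r (n+3))
          = (Polynomial.X + Polynomial.C ((-1:ℂ)^(n+3) * (2*((n+3:ℕ):ℂ) - 1))) *
            MvPolynomial.aeval ![Polynomial.X, 2, 0, 0] (r (n+2)) := by
        rw [key]
        congr 1
        simp [Polynomial.C_mul, Polynomial.C_sub, map_ofNat]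
      have hne : ((n+3:ℕ):ℂ) ≠ 0 := Nat.cast_ne_zero.mpr (by omega)
      have hinj := smul_right_injective (Polynomial ℂ) hne
      apply hinj
      dsimp only
      rw [key2, ih (n+2) (by omega)]
      rw [mul_smul_comm, smul_smul]
      conv_rhs => rw [Finset.prod_range_succ]
      have hs : (((n+3).factorial : ℂ)) = ((n+3:ℕ) : ℂ) * ((n+2).factorial : ℂ) := by
        rw [show n+3 = (n+2)+1 from rfl, Nat.factorial_succ]; push_cast; ring
      rw [hs, mul_inv, ← mul_assoc, mul_inv_cancel₀ hne, one_mul]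
      congr 1
      rw [mul_comm]
      congr 1
      conv_rhs => rw [sub_eq_add_neg, ← Polynomial.C_neg]
      congr 1
      push_cast [pow_succ]
      ring
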